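/- Let R ⊆ S_n be a top-k partial ranking, σ ∈ R, and τ ∈ S_n. Then the Kendall distance satisfies d(A_R(σ), τ) = d(σ, τ) + C(n−k, 2) − 2·d(σ, Π_R(τ)). -/

import Mathlib

/-- The Kendall (tau) distance between two permutations of `Fin n`:
the number of pairs `(x, y)` with `x < y` on which `σ⁻¹` and `τ⁻¹`
disagree in relative order. -/
def kendallDist {n : ℕ} (σ τ : Equiv.Perm (Fin n)) : ℕ :=
  (Finset.univ.filter (fun p : Fin n × Fin n =>
    p.1 < p.2 ∧ ¬((σ⁻¹ p.1 < σ⁻¹ p.2) ↔ (τ⁻¹ p.1 < τ⁻¹ p.2)))).card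

/-- The top-`k` partial ranking determined by the items `a 0, …, a (k-1)`:
the set of full rankings (permutations) `σ` with `σ i = a i` for the first
`k` positions. -/
def topkFinset {n k : ℕ} (hk : k ≤ n) (a : Fin k → Fin n) :
    Finset (Equiv.Perm (Fin n)) :=
  Finset.univ.filter fun σ => ∀ i : Fin k, σ (Fin.castLE hk i) = a i

/-- The permutation of `Fin n` fixing the first `k` positions and reversing
the order of the remaining `n - k` positions. -/
def revAfter (n k : ℕ) : Equiv.Perm (Fin n) :=
  Function.Involutive.toPerm
    (fun p => if _h : (p : ℕ) < k then p
      else ⟨n + k - 1 - (p : ℕ), by have := p.isLt; omega⟩)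
    (by
      intro p
      have hp := p.isLt
      by_cases h : (p : ℕ) < k
      · simp [h]
      · have h2 : ¬ (n + k - 1 - (p : ℕ) < k) := by omega
        simp only [dif_neg h, dif_neg h2]
        ext
        simp
        omega)

/-- The antithetic permutation of `σ` relative to a top-`k` partial ranking:
the first `k` positions are unchanged and the remaining positions are
reversed, i.e. `A σ (k+j) = σ (n+1-j)` (in 1-indexed notation). -/
def antithetic (n k : ℕ) (σ : Equiv.Perm (Fin n)) : Equiv.Perm (Fin n) :=
  σ * revAfter n k

theorem Equiv.Perm.apply_inv_self {α : Type*} (f : Equiv.Perm α) (x : α) : f (f⁻¹ x) = x :=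
  f.apply_symm_apply x

theorem Equiv.Perm.inv_apply_self {α : Type*} (f : Equiv.Perm α) (x : α) : f⁻¹ (f x) = x :=
  f.symm_apply_apply x

lemma revAfter_coe {n k : ℕ} (p : Fin n) :
    ((revAfter n k p : Fin n) : ℕ) =
      if (p : ℕ) < k then (p : ℕ) else n + k - 1 - (p : ℕ) := by
  by_cases h : (p : ℕ) < k
  · simp [revAfter, Function.Involutive.toPerm, h]
  · simp [revAfter, Function.Involutive.toPerm, h]

lemma revAfter_inv (n k : ℕ) : (revAfter n k)⁻¹ = revAfter n k := by
  show (revAfter n k).symm = revAfter n k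
  exact Function.Involutive.toPerm_symm _

lemma antithetic_inv_apply {n k : ℕ} (σ : Equiv.Perm (Fin n)) (z : Fin n) :
    (antithetic n k σ)⁻¹ z = revAfter n k (σ⁻¹ z) := by
  rw [antithetic, mul_inv_rev, revAfter_inv, Equiv.Perm.mul_apply]

lemma mem_topk_iff {n k : ℕ} (hk : k ≤ n) (a : Fin k → Fin n) (σ : Equiv.Perm (Fin n)) :
    σ ∈ topkFinset hk a ↔ ∀ i : Fin k, σ (Fin.castLE hk i) = a i := by
  simp [topkFinset]

lemma inv_agree_of_lt {n k : ℕ} (hk : k ≤ n) (a : Fin k → Fin n)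
    {σ π : Equiv.Perm (Fin n)} (hσ : σ ∈ topkFinset hk a) (hπ : π ∈ topkFinset hk a)
    (x : Fin n) (h : (σ⁻¹ x : ℕ) < k) : π⁻¹ x = σ⁻¹ x := by
  rw [mem_topk_iff] at hσ hπ
  have hcast : Fin.castLE hk ⟨(σ⁻¹ x : ℕ), h⟩ = σ⁻¹ x := by
    ext; simp
  have hxval : x = a ⟨(σ⁻¹ x : ℕ), h⟩ := by
    rw [← hσ ⟨(σ⁻¹ x : ℕ), h⟩, hcast, Equiv.Perm.apply_inv_self]
  have h5 : π (Fin.castLE hk ⟨(σ⁻¹ x : ℕ), h⟩) = x := by rw [hπ, ← hxval]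
  have h6 : π⁻¹ x = Fin.castLE hk ⟨(σ⁻¹ x : ℕ), h⟩ := by
    apply π.injective
    rw [Equiv.Perm.apply_inv_self, h5]
  rw [h6, hcast]

lemma inv_lt_iff_lt {n k : ℕ} (hk : k ≤ n) (a : Fin k → Fin n)
    {σ π : Equiv.Perm (Fin n)} (hσ : σ ∈ topkFinset hk a) (hπ : π ∈ topkFinset hk a)
    (x : Fin n) : (σ⁻¹ x : ℕ) < k ↔ (π⁻¹ x : ℕ) < k := by
  constructor
  · intro h; rw [inv_agree_of_lt hk a hσ hπ x h]; exact h
  · intro h; rw [inv_agree_of_lt hk a hπ hσ x h]; exact h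

lemma swap_adj_lt_iff {n : ℕ} (m0 m1 s t : Fin n) (hadj : (m1 : ℕ) = (m0 : ℕ) + 1)
    (hst : s ≠ t) (h1 : ¬(s = m0 ∧ t = m1)) (h2 : ¬(s = m1 ∧ t = m0)) :
    (Equiv.swap m0 m1 s < Equiv.swap m0 m1 t ↔ s < t) := by
  rw [Equiv.swap_apply_def, Equiv.swap_apply_def]
  split_ifs <;> (simp only [Fin.lt_def, Fin.ext_iff, not_and] at *) <;> omega

lemma kendall_swap_lt {n : ℕ} (π τ : Equiv.Perm (Fin n)) (m0 m1 : Fin n)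
    (hadj : (m1 : ℕ) = (m0 : ℕ) + 1)
    (hτ : τ⁻¹ (π m1) < τ⁻¹ (π m0)) :
    kendallDist (π * Equiv.swap m0 m1) τ < kendallDist π τ := by
  have hm01 : m0 ≠ m1 := by
    intro h; rw [h] at hadj; omega
  have hm01' : m0 < m1 := by rw [Fin.lt_def]; omega
  set x := π m0 with hx
  set y := π m1 with hy
  have hxy : x ≠ y := fun h => hm01 (π.injective h)
  have hπx : π⁻¹ x = m0 := Equiv.Perm.inv_apply_self π m0
  have hπy : π⁻¹ y = m1 := Equiv.Perm.inv_apply_self π m1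
  have hρinv : ∀ z, (π * Equiv.swap m0 m1)⁻¹ z = Equiv.swap m0 m1 (π⁻¹ z) := by
    intro z
    rw [mul_inv_rev, Equiv.Perm.mul_apply, Equiv.swap_inv]
  set p0 : Fin n × Fin n := if x < y then (x, y) else (y, x) with hp0def
  have hp0 : (p0 = (x, y) ∧ x < y) ∨ (p0 = (y, x) ∧ y < x) := by
    rcases lt_or_gt_of_ne hxy with h|h
    · left; simp [hp0def, h]
    · right; constructor
      · simp [hp0def, not_lt.mpr h.le]
      · exact h
  have hπmem : p0 ∈ Finset.univ.filter (fun p : Fin n × Fin n =>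
      p.1 < p.2 ∧ ¬((π⁻¹ p.1 < π⁻¹ p.2) ↔ (τ⁻¹ p.1 < τ⁻¹ p.2))) := by
    simp only [Finset.mem_filter, Finset.mem_univ, true_and]
    rcases hp0 with ⟨he, hlt⟩|⟨he, hlt⟩
    · rw [he]
      refine ⟨hlt, fun hiff => ?_⟩
      simp only [hπx, hπy] at hiff
      exact absurd (hiff.mp hm01') (asymm hτ)
    · rw [he]
      refine ⟨hlt, fun hiff => ?_⟩
      simp only [hπx, hπy] at hiff
      exact absurd (hiff.mpr hτ) (asymm hm01')
  have hρnot : ¬ (p0.1 < p0.2 ∧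
      ¬(((π * Equiv.swap m0 m1)⁻¹ p0.1 < (π * Equiv.swap m0 m1)⁻¹ p0.2) ↔
        (τ⁻¹ p0.1 < τ⁻¹ p0.2))) := by
    rcases hp0 with ⟨he, hlt⟩|⟨he, hlt⟩
    · rw [he]
      simp only [hρinv, hπx, hπy, Equiv.swap_apply_left, Equiv.swap_apply_right, not_and,
        not_not]
      intro _
      exact ⟨fun h => absurd h (asymm hm01'), fun h => absurd h (asymm hτ)⟩
    · rw [he]
      simp only [hρinv, hπx, hπy, Equiv.swap_apply_left, Equiv.swap_apply_right, not_and,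
        not_not]
      intro _
      exact ⟨fun _ => hτ, fun _ => hm01'⟩
  have hkey : ∀ p : Fin n × Fin n, p.1 < p.2 → p ≠ p0 →
      (Equiv.swap m0 m1 (π⁻¹ p.1) < Equiv.swap m0 m1 (π⁻¹ p.2) ↔ π⁻¹ p.1 < π⁻¹ p.2) := by
    intro p hlt hne
    have h1 : ¬(π⁻¹ p.1 = m0 ∧ π⁻¹ p.2 = m1) := by
      rintro ⟨ha', hb'⟩
      have hp1 : p.1 = x := by rw [hx, ← ha', Equiv.Perm.apply_inv_self]
      have hp2 : p.2 = y := by rw [hy, ← hb', Equiv.Perm.apply_inv_self]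
      rcases hp0 with ⟨he, hl⟩|⟨he, hl⟩
      · exact hne (by rw [he, ← hp1, ← hp2])
      · have : x < y := by rw [← hp1, ← hp2]; exact hlt
        exact asymm hl this
    have h2 : ¬(π⁻¹ p.1 = m1 ∧ π⁻¹ p.2 = m0) := by
      rintro ⟨ha', hb'⟩
      have hp1 : p.1 = y := by rw [hy, ← ha', Equiv.Perm.apply_inv_self]
      have hp2 : p.2 = x := by rw [hx, ← hb', Equiv.Perm.apply_inv_self]
      rcases hp0 with ⟨he, hl⟩|⟨he, hl⟩
      · have : y < x := by rw [← hp1, ← hp2]; exact hlt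
        exact asymm hl this
      · exact hne (by rw [he, ← hp1, ← hp2])
    have hst : π⁻¹ p.1 ≠ π⁻¹ p.2 := fun h => hlt.ne (π⁻¹.injective h)
    exact swap_adj_lt_iff m0 m1 _ _ hadj hst h1 h2
  have hfilter : Finset.univ.filter (fun p : Fin n × Fin n =>
      p.1 < p.2 ∧ ¬(((π * Equiv.swap m0 m1)⁻¹ p.1 < (π * Equiv.swap m0 m1)⁻¹ p.2) ↔
        (τ⁻¹ p.1 < τ⁻¹ p.2))) =
      (Finset.univ.filter (fun p : Fin n × Fin n =>
        p.1 < p.2 ∧ ¬((π⁻¹ p.1 < π⁻¹ p.2) ↔ (τ⁻¹ p.1 < τ⁻¹ p.2)))).erase p0 := by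
    ext p
    simp only [Finset.mem_filter, Finset.mem_univ, true_and, Finset.mem_erase]
    constructor
    · rintro ⟨hlt, hdis⟩
      have hne : p ≠ p0 := fun h => hρnot (h ▸ ⟨hlt, hdis⟩)
      refine ⟨hne, hlt, ?_⟩
      rw [← hkey p hlt hne]
      simpa only [hρinv] using hdis
    · rintro ⟨hne, hlt, hdis⟩
      refine ⟨hlt, ?_⟩
      simp only [hρinv]
      rw [hkey p hlt hne]
      exact hdis
  rw [kendallDist, kendallDist, hfilter, Finset.card_erase_of_mem hπmem]
  have : 0 < (Finset.univ.filter (fun p : Fin n × Fin n =>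
      p.1 < p.2 ∧ ¬((π⁻¹ p.1 < π⁻¹ p.2) ↔ (τ⁻¹ p.1 < τ⁻¹ p.2)))).card :=
    Finset.card_pos.mpr ⟨p0, hπmem⟩
  omega

lemma revAfter_lt_flip {n k : ℕ} (a b : Fin n) (hka : k ≤ (a : ℕ)) (hkb : k ≤ (b : ℕ)) :
    revAfter n k a < revAfter n k b ↔ b < a := by
  have ha := a.isLt; have hb := b.isLt
  rw [Fin.lt_def, Fin.lt_def, revAfter_coe, revAfter_coe]
  split_ifs <;> omega

lemma revAfter_lt_keep {n k : ℕ} (a b : Fin n) (h : ¬(k ≤ (a : ℕ) ∧ k ≤ (b : ℕ))) :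
    revAfter n k a < revAfter n k b ↔ a < b := by
  have ha := a.isLt; have hb := b.isLt
  rw [Fin.lt_def, Fin.lt_def, revAfter_coe, revAfter_coe]
  push_neg at h
  split_ifs <;> omega

lemma proj_tail_agree {n k : ℕ} (hk : k ≤ n) (a : Fin k → Fin n)
    {π τ : Equiv.Perm (Fin n)} (hπ : π ∈ topkFinset hk a)
    (hmin : ∀ ρ ∈ topkFinset hk a, kendallDist π τ ≤ kendallDist ρ τ)
    {u v : Fin n} (hu : k ≤ (π⁻¹ u : ℕ)) (hv : k ≤ (π⁻¹ v : ℕ))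
    (huv : π⁻¹ u < π⁻¹ v) : τ⁻¹ u < τ⁻¹ v := by
  have adj : ∀ (m : ℕ) (hm : k ≤ m) (h1 : m + 1 < n),
      τ⁻¹ (π ⟨m, by omega⟩) < τ⁻¹ (π ⟨m + 1, h1⟩) := by
    intro m hm h1
    by_contra hcon
    push_neg at hcon
    have hmne : (⟨m, by omega⟩ : Fin n) ≠ ⟨m + 1, h1⟩ := by
      simp [Fin.ext_iff]
    have hne : π ⟨m, by omega⟩ ≠ π ⟨m + 1, h1⟩ := fun h => hmne (π.injective h)
    have hlt : τ⁻¹ (π ⟨m + 1, h1⟩) < τ⁻¹ (π ⟨m, by omega⟩) :=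
      lt_of_le_of_ne hcon (fun h => hne ((τ⁻¹).injective h).symm)
    set ρ := π * Equiv.swap (⟨m, by omega⟩ : Fin n) ⟨m + 1, h1⟩ with hρ
    have hρmem : ρ ∈ topkFinset hk a := by
      rw [mem_topk_iff] at hπ ⊢
      intro i
      rw [hρ, Equiv.Perm.mul_apply, Equiv.swap_apply_of_ne_of_ne, hπ i]
      · simp only [ne_eq, Fin.ext_iff, Fin.coe_castLE]
        have := i.isLt; omega
      · simp only [ne_eq, Fin.ext_iff, Fin.coe_castLE]
        have := i.isLt; omega
    exact absurd (hmin ρ hρmem)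
      (not_le.mpr (kendall_swap_lt π τ _ _ (by simp) hlt))
  have gen : ∀ (d m : ℕ) (hm : k ≤ m) (h1 : m + d + 1 < n),
      τ⁻¹ (π ⟨m, by omega⟩) < τ⁻¹ (π ⟨m + d + 1, h1⟩) := by
    intro d
    induction d with
    | zero => intro m hm h1; exact adj m hm h1
    | succ d ih =>
      intro m hm h1
      have h2 : m + d + 1 < n := by omega
      exact lt_trans (ih m hm h2) (adj (m + d + 1) (by omega) h1)
  have h1 : (π⁻¹ u : ℕ) < (π⁻¹ v : ℕ) := huv
  have hvn : (π⁻¹ v : ℕ) < n := (π⁻¹ v).isLt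
  have := gen ((π⁻¹ v : ℕ) - (π⁻¹ u : ℕ) - 1) (π⁻¹ u : ℕ) hu (by omega)
  have e1 : (⟨(π⁻¹ u : ℕ), by omega⟩ : Fin n) = π⁻¹ u := rfl
  have e2 : (⟨(π⁻¹ u : ℕ) + ((π⁻¹ v : ℕ) - (π⁻¹ u : ℕ) - 1) + 1, by omega⟩ : Fin n)
      = π⁻¹ v := by rw [Fin.ext_iff]; simp only []; omega
  rw [e1, e2, Equiv.Perm.apply_inv_self, Equiv.Perm.apply_inv_self] at this
  exact this

open Finset in
lemma pair_min_max {α : Type*} [LinearOrder α] (x y : α) (h : x < y) :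
    ∃ hne : ({x, y} : Finset α).Nonempty,
      ({x, y} : Finset α).min' hne = x ∧ ({x, y} : Finset α).max' hne = y := by
  refine ⟨Finset.insert_nonempty x {y}, ?_, ?_⟩
  · apply le_antisymm (Finset.min'_le _ _ (by simp))
    apply Finset.le_min'
    intro z hz; rcases Finset.mem_insert.mp hz with h'|h'
    · exact h' ▸ le_refl _
    · rw [Finset.mem_singleton] at h'; exact h' ▸ h.le
  · apply le_antisymm
    · apply Finset.max'_le
      intro z hz; rcases Finset.mem_insert.mp hz with h'|h'
      · exact h' ▸ h.le
      · rw [Finset.mem_singleton] at h'; exact h' ▸ le_refl _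
    · exact Finset.le_max' _ _ (by simp)

open Finset in
lemma card_pairs {α : Type*} [Fintype α] [LinearOrder α] (T : Finset α) :
    (univ.filter fun p : α × α => p.1 < p.2 ∧ p.1 ∈ T ∧ p.2 ∈ T).card = T.card.choose 2 := by
  rw [← Finset.card_powersetCard 2 T]
  have hne : ∀ s ∈ T.powersetCard 2, s.Nonempty := by
    intro s hs
    rw [Finset.mem_powersetCard] at hs
    exact Finset.card_pos.mp (by omega)
  have hi : ∀ p ∈ (univ.filter fun p : α × α => p.1 < p.2 ∧ p.1 ∈ T ∧ p.2 ∈ T),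
      ({p.1, p.2} : Finset α) ∈ T.powersetCard 2 := by
    intro p hp
    simp only [mem_filter, mem_univ, true_and] at hp
    rw [Finset.mem_powersetCard]
    refine ⟨?_, ?_⟩
    · intro z hz
      rcases Finset.mem_insert.mp hz with h|h
      · exact h ▸ hp.2.1
      · rw [Finset.mem_singleton] at h; exact h ▸ hp.2.2
    · rw [Finset.card_insert_of_notMem (by simp [hp.1.ne]), Finset.card_singleton]
  have hj : ∀ (s : Finset α) (hs : s ∈ T.powersetCard 2),
      (s.min' (hne s hs), s.max' (hne s hs)) ∈
        (univ.filter fun p : α × α => p.1 < p.2 ∧ p.1 ∈ T ∧ p.2 ∈ T) := by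
    intro s hs
    have hs' := Finset.mem_powersetCard.mp hs
    have h1 : 1 < s.card := by omega
    simp only [mem_filter, mem_univ, true_and]
    exact ⟨Finset.min'_lt_max'_of_card s h1, hs'.1 (Finset.min'_mem _ _),
      hs'.1 (Finset.max'_mem _ _)⟩
  refine Finset.card_bij' (fun p _ => ({p.1, p.2} : Finset α))
    (fun s hs => (s.min' (hne s hs), s.max' (hne s hs))) hi hj ?_ ?_
  · intro p hp
    simp only [mem_filter, mem_univ, true_and] at hp
    obtain ⟨hne', hmin, hmax⟩ := pair_min_max p.1 p.2 hp.1
    refine Prod.ext ?_ ?_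
    · exact hmin
    · exact hmax
  · intro s hs
    have hs' := Finset.mem_powersetCard.mp hs
    have h1 : 1 < s.card := by omega
    apply Finset.eq_of_subset_of_card_le
    · intro z hz
      rcases Finset.mem_insert.mp hz with h|h
      · exact h ▸ Finset.min'_mem s (hne s hs)
      · rw [Finset.mem_singleton] at h; exact h ▸ Finset.max'_mem s (hne s hs)
    · rw [hs'.2, Finset.card_insert_of_notMem
        (by simp [(Finset.min'_lt_max'_of_card s h1).ne]), Finset.card_singleton]


set_option maxHeartbeats 2000000 in
/-- For a top-`k` partial ranking `R`, `σ ∈ R` and any `τ ∈ S_n`,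
`d(A_R(σ), τ) = d(σ, τ) + C(n−k, 2) − 2·d(σ, Π_R(τ))`, where `Π_R(τ)` is the
(unique) Kendall-closest element of `R` to `τ`, here characterized as any
minimizer `π`. -/
theorem kendallDist_antithetic_proj {n k : ℕ} (hk : k ≤ n) (a : Fin k → Fin n)
    (ha : Function.Injective a) (σ τ π : Equiv.Perm (Fin n))
    (hσ : σ ∈ topkFinset hk a) (hπ : π ∈ topkFinset hk a)
    (hmin : ∀ ρ ∈ topkFinset hk a, kendallDist π τ ≤ kendallDist ρ τ) :
    (kendallDist (antithetic n k σ) τ : ℤ) =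
      (kendallDist σ τ : ℤ) + ((n - k).choose 2 : ℤ)
        - 2 * (kendallDist σ π : ℤ) := by
  set T : Finset (Fin n) := Finset.univ.filter (fun x : Fin n => k ≤ ((σ⁻¹ x : Fin n) : ℕ))
    with hTdef
  have hmemT : ∀ x : Fin n, x ∈ T ↔ k ≤ ((σ⁻¹ x : Fin n) : ℕ) := by
    intro x; simp [hTdef]
  -- T has n - k elements
  have hTcard : T.card = n - k := by
    have himg : T = Finset.image σ (Finset.univ.filter fun q : Fin n => k ≤ (q : ℕ)) := by
      ext x
      rw [hmemT, Finset.mem_image]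
      constructor
      · intro h
        exact ⟨σ⁻¹ x, by simpa using h, Equiv.Perm.apply_inv_self σ x⟩
      · rintro ⟨q, hq, rfl⟩
        simp only [Finset.mem_filter, Finset.mem_univ, true_and] at hq
        rwa [Equiv.Perm.inv_apply_self]
    rw [himg, Finset.card_image_of_injective _ σ.injective]
    rw [← Fintype.card_fin (n - k), ← Finset.card_univ]
    apply Finset.card_bij (fun (q : Fin n) hq =>
      (⟨(q : ℕ) - k, by
        simp only [Finset.mem_filter, Finset.mem_univ, true_and] at hq
        have := q.isLt; omega⟩ : Fin (n - k)))
    · intros; exact Finset.mem_univ _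
    · intro q1 h1 q2 h2 he
      simp only [Finset.mem_filter, Finset.mem_univ, true_and] at h1 h2
      rw [Fin.ext_iff] at he ⊢
      simp only [] at he
      omega
    · intro b _
      refine ⟨⟨k + (b : ℕ), by have := b.isLt; omega⟩, by simp, ?_⟩
      rw [Fin.ext_iff]
      simp
  -- tail membership transfer between σ and π
  have htail : ∀ z : Fin n, k ≤ ((σ⁻¹ z : Fin n) : ℕ) ↔ k ≤ ((π⁻¹ z : Fin n) : ℕ) := by
    intro z
    have := inv_lt_iff_lt hk a hσ hπ z
    omega
  -- π agrees with τ on tail pairs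
  have hτπ : ∀ u v : Fin n, u ≠ v → k ≤ ((π⁻¹ u : Fin n) : ℕ) → k ≤ ((π⁻¹ v : Fin n) : ℕ) →
      (π⁻¹ u < π⁻¹ v ↔ τ⁻¹ u < τ⁻¹ v) := by
    intro u v huv hu hv
    constructor
    · exact proj_tail_agree hk a hπ hmin hu hv
    · intro h
      by_contra hno
      have hne : π⁻¹ u ≠ π⁻¹ v := fun hh => huv ((π⁻¹).injective hh)
      have : π⁻¹ v < π⁻¹ u := lt_of_le_of_ne (not_lt.mp hno) hne.symm
      exact asymm h (proj_tail_agree hk a hπ hmin hv hu this)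
  -- canonical finsets
  set s0 : Finset (Fin n × Fin n) := Finset.univ.filter (fun p : Fin n × Fin n =>
    p.1 < p.2 ∧ ¬((σ⁻¹ p.1 < σ⁻¹ p.2) ↔ (τ⁻¹ p.1 < τ⁻¹ p.2))) with hs0
  set t0 : Finset (Fin n × Fin n) := Finset.univ.filter (fun p : Fin n × Fin n =>
    p.1 < p.2 ∧ p.1 ∈ T ∧ p.2 ∈ T) with ht0
  set Bp : Fin n × Fin n → Prop := fun p => p.1 ∈ T ∧ p.2 ∈ T with hBp
  -- pointwise description of the antithetic disagreement
  have F1 : ∀ p : Fin n × Fin n, p.1 < p.2 →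
      (¬(((antithetic n k σ)⁻¹ p.1 < (antithetic n k σ)⁻¹ p.2) ↔ (τ⁻¹ p.1 < τ⁻¹ p.2)) ↔
        (¬((σ⁻¹ p.1 < σ⁻¹ p.2) ↔ (τ⁻¹ p.1 < τ⁻¹ p.2)) ↔ ¬ Bp p)) := by
    intro p hlt
    rw [antithetic_inv_apply, antithetic_inv_apply]
    have hne : σ⁻¹ p.1 ≠ σ⁻¹ p.2 := fun h => hlt.ne ((σ⁻¹).injective h)
    by_cases hB : Bp p
    · obtain ⟨h1, h2⟩ := hB
      rw [hmemT] at h1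
      rw [hmemT] at h2
      have hflip := revAfter_lt_flip (σ⁻¹ p.1) (σ⁻¹ p.2) h1 h2
      have hor : σ⁻¹ p.2 < σ⁻¹ p.1 ↔ ¬(σ⁻¹ p.1 < σ⁻¹ p.2) := by
        rw [Fin.lt_def, Fin.lt_def]
        have : ((σ⁻¹ p.1 : Fin n) : ℕ) ≠ ((σ⁻¹ p.2 : Fin n) : ℕ) := fun h => hne (Fin.ext h)
        omega
      rw [hflip, hor]
      have : Bp p := ⟨(hmemT _).mpr h1, (hmemT _).mpr h2⟩
      tauto
    · have hkeep := revAfter_lt_keep (σ⁻¹ p.1) (σ⁻¹ p.2) (by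
        intro hcon
        exact hB ⟨(hmemT _).mpr hcon.1, (hmemT _).mpr hcon.2⟩)
      rw [hkeep]
      tauto
  -- pointwise description of the σ-π disagreement
  have F2 : ∀ p : Fin n × Fin n, p.1 < p.2 →
      (¬((σ⁻¹ p.1 < σ⁻¹ p.2) ↔ (π⁻¹ p.1 < π⁻¹ p.2)) ↔
        (¬((σ⁻¹ p.1 < σ⁻¹ p.2) ↔ (τ⁻¹ p.1 < τ⁻¹ p.2)) ∧ Bp p)) := by
    intro p hlt
    by_cases hB : Bp p
    · obtain ⟨h1, h2⟩ := hB
      rw [hmemT] at h1; rw [hmemT] at h2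
      have hπτ := hτπ p.1 p.2 hlt.ne ((htail p.1).mp h1) ((htail p.2).mp h2)
      have : Bp p := ⟨(hmemT _).mpr h1, (hmemT _).mpr h2⟩
      rw [hπτ]
      tauto
    · have hagree : (σ⁻¹ p.1 < σ⁻¹ p.2 ↔ π⁻¹ p.1 < π⁻¹ p.2) := by
        have hb' : ¬(k ≤ ((σ⁻¹ p.1 : Fin n) : ℕ) ∧ k ≤ ((σ⁻¹ p.2 : Fin n) : ℕ)) := by
          intro hcon
          exact hB ⟨(hmemT _).mpr hcon.1, (hmemT _).mpr hcon.2⟩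
        rcases lt_or_ge ((σ⁻¹ p.1 : Fin n) : ℕ) k with hc1 | hc1 <;>
          rcases lt_or_ge ((σ⁻¹ p.2 : Fin n) : ℕ) k with hc2 | hc2
        · rw [inv_agree_of_lt hk a hσ hπ p.1 hc1, inv_agree_of_lt hk a hσ hπ p.2 hc2]
        · have e1 := inv_agree_of_lt hk a hσ hπ p.1 hc1
          have e2 : k ≤ ((π⁻¹ p.2 : Fin n) : ℕ) := (htail p.2).mp hc2
          rw [Fin.lt_def, Fin.lt_def, e1]
          omega
        · have e1 : k ≤ ((π⁻¹ p.1 : Fin n) : ℕ) := (htail p.1).mp hc1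
          have e2 := inv_agree_of_lt hk a hσ hπ p.2 hc2
          rw [Fin.lt_def, Fin.lt_def, e2]
          omega
        · exact absurd ⟨hc1, hc2⟩ hb'
      rw [hagree]
      tauto
  -- the four counting identities
  have hd_decomp : kendallDist σ τ = (s0.filter Bp).card + (s0.filter (fun p => ¬ Bp p)).card := by
    rw [kendallDist, ← hs0, Finset.card_filter_add_card_filter_not]
  have hchoose : ((n - k).choose 2) = (t0.filter (fun p =>
      (σ⁻¹ p.1 < σ⁻¹ p.2) ↔ (τ⁻¹ p.1 < τ⁻¹ p.2))).card +
      (t0.filter (fun p => ¬((σ⁻¹ p.1 < σ⁻¹ p.2) ↔ (τ⁻¹ p.1 < τ⁻¹ p.2)))).card := by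
    have e : (Finset.univ.filter fun p : Fin n × Fin n =>
        p.1 < p.2 ∧ p.1 ∈ T ∧ p.2 ∈ T).card = T.card.choose 2 := by
      convert card_pairs T using 2
    rw [← hTcard, ← e, ← ht0, Finset.card_filter_add_card_filter_not]
  have htD : (t0.filter (fun p => ¬((σ⁻¹ p.1 < σ⁻¹ p.2) ↔ (τ⁻¹ p.1 < τ⁻¹ p.2)))).card
      = (s0.filter Bp).card := by
    congr 1
    ext p
    simp only [ht0, hs0, hBp, Finset.mem_filter, Finset.mem_univ, true_and]
    tauto
  have hσπ : kendallDist σ π = (s0.filter Bp).card := by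
    rw [kendallDist]
    congr 1
    ext p
    simp only [hs0, hBp, Finset.mem_filter, Finset.mem_univ, true_and]
    constructor
    · rintro ⟨hlt, hdis⟩
      have := (F2 p hlt).mp hdis
      exact ⟨⟨hlt, this.1⟩, this.2⟩
    · rintro ⟨⟨hlt, hdis⟩, hB⟩
      exact ⟨hlt, (F2 p hlt).mpr ⟨hdis, hB⟩⟩
  have hA : kendallDist (antithetic n k σ) τ = (s0.filter (fun p => ¬ Bp p)).card +
      (t0.filter (fun p => (σ⁻¹ p.1 < σ⁻¹ p.2) ↔ (τ⁻¹ p.1 < τ⁻¹ p.2))).card := by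
    rw [kendallDist]
    rw [← Finset.card_union_of_disjoint (by
      rw [Finset.disjoint_left]
      intro p hp hq
      simp only [hs0, ht0, hBp, Finset.mem_filter, Finset.mem_univ, true_and] at hp hq
      exact hp.2 ⟨hq.1.2.1, hq.1.2.2⟩)]
    congr 1
    ext p
    simp only [hs0, ht0, hBp, Finset.mem_union, Finset.mem_filter, Finset.mem_univ, true_and]
    constructor
    · rintro ⟨hlt, hdis⟩
      have h := (F1 p hlt).mp hdis
      by_cases hB : p.1 ∈ T ∧ p.2 ∈ T
      · right
        exact ⟨⟨hlt, hB.1, hB.2⟩, by tauto⟩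
      · left
        exact ⟨⟨hlt, by tauto⟩, hB⟩
    · rintro (⟨⟨hlt, hdis⟩, hB⟩ | ⟨⟨hlt, hB1, hB2⟩, hiff⟩)
      · exact ⟨hlt, (F1 p hlt).mpr (by tauto)⟩
      · refine ⟨hlt, (F1 p hlt).mpr ?_⟩
        have : Bp p := ⟨hB1, hB2⟩
        tauto
  rw [hA, hd_decomp, hchoose, htD, hσπ]
  push_cast
  ring
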